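/- For any constant c > 0, the function B ↦ 1 / (B · log(1 + c/B)) (natural logarithm) is convex on (0, ∞). (Consequently, the objective of the bandwidth-allocation problem (P3), 1/(ρ·R(B_u)) + 1/R(B_d), is a convex function of (B_u, B_d) on the positive orthant, so (P3) is a convex optimization problem.) -/

import Mathlib

open Real Set

theorem inv_shannon_rate_convexOn (c : ℝ) (hc : 0 < c) :
    ConvexOn ℝ (Set.Ioi (0 : ℝ))
      (fun B : ℝ => 1 / (B * Real.log (1 + c / B))) := by
  set L : ℝ → ℝ := fun B => Real.log (1 + c / B) with hLdef
  set N : ℝ → ℝ := fun B => L B - c / (B + c) with hNdef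
  -- basic facts
  have hLpos : ∀ x : ℝ, 0 < x → 0 < L x := by
    intro x hx
    apply Real.log_pos
    have : 0 < c / x := div_pos hc hx
    linarith
  have hxc : ∀ x : ℝ, 0 < x → (0:ℝ) < x + c := fun x hx => by linarith
  -- derivative of L
  have hLd : ∀ x : ℝ, 0 < x → HasDerivAt L (-(c / (x * (x + c)))) x := by
    intro x hx
    have h1 : HasDerivAt (fun B : ℝ => c / B) ((0 * x - c * 1) / x ^ 2) x :=
      (hasDerivAt_const x c).div (hasDerivAt_id x) hx.ne'
    have h2 : HasDerivAt (fun B : ℝ => 1 + c / B) ((0 * x - c * 1) / x ^ 2) x :=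
      h1.const_add 1
    have hne : (1 : ℝ) + c / x ≠ 0 := by positivity
    have h3 := h2.log hne
    convert h3 using 1
    field_simp
    ring
  -- derivative of B * L B
  have hgd : ∀ x : ℝ, 0 < x → HasDerivAt (fun B : ℝ => B * L B) (N x) x := by
    intro x hx
    have := (hasDerivAt_id' x).fun_mul (hLd x hx)
    refine this.congr_deriv ?_
    have hxc' := hxc x hx
    show _ = L x - c / (x + c)
    field_simp
    ring
  have hgne : ∀ x : ℝ, 0 < x → x * L x ≠ 0 := fun x hx =>
    (mul_pos hx (hLpos x hx)).ne'
  -- first derivative of f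
  have hfd : ∀ x : ℝ, 0 < x →
      HasDerivAt (fun B : ℝ => 1 / (B * L B)) (-(N x) / (x * L x) ^ 2) x := by
    intro x hx
    have := (hgd x hx).inv (hgne x hx)
    simpa only [one_div, Pi.inv_def] using this
  -- derivative of N
  have hNd : ∀ x : ℝ, 0 < x →
      HasDerivAt N (-(c / (x * (x + c))) - (0 * (x + c) - c * 1) / (x + c) ^ 2) x := by
    intro x hx
    exact (hLd x hx).sub
      ((hasDerivAt_const x c).div ((hasDerivAt_id x).add_const c) (hxc x hx).ne')
  -- derivative of D = (B * L B)^2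
  have hDd : ∀ x : ℝ, 0 < x →
      HasDerivAt (fun B : ℝ => (B * L B) ^ 2) (2 * (x * L x) ^ 1 * N x) x := by
    intro x hx
    exact (hgd x hx).pow 2
  -- second derivative expression
  set E : ℝ → ℝ := fun x =>
    ((-(-(c / (x * (x + c))) - (0 * (x + c) - c * 1) / (x + c) ^ 2)) * (x * L x) ^ 2
      - (-(N x)) * (2 * (x * L x) ^ 1 * N x)) / ((x * L x) ^ 2) ^ 2 with hEdef
  have hF1d : ∀ x : ℝ, 0 < x →
      HasDerivAt (fun B : ℝ => -(N B) / (B * L B) ^ 2) (E x) x := by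
    intro x hx
    exact ((hNd x hx).neg).div (hDd x hx) (pow_ne_zero 2 (hgne x hx))
  -- nonnegativity of E
  have hEnn : ∀ x : ℝ, 0 < x → 0 ≤ E x := by
    intro x hx
    have hL := hLpos x hx
    have hxc' := hxc x hx
    apply div_nonneg _ (by positivity)
    have h1 : (0:ℝ) ≤ (c / (x * (x + c)) - c / (x + c) ^ 2) * (x * L x) ^ 2 := by
      have : c / (x + c) ^ 2 ≤ c / (x * (x + c)) := by
        apply div_le_div_of_nonneg_left hc.le (by positivity)
        nlinarith
      nlinarith [sq_nonneg (x * L x)]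
    have h2 : (0:ℝ) ≤ 2 * (x * L x) * (N x) ^ 2 := by positivity
    have key : (-(-(c / (x * (x + c))) - (0 * (x + c) - c * 1) / (x + c) ^ 2)) * (x * L x) ^ 2
        - (-(N x)) * (2 * (x * L x) ^ 1 * N x)
        = (c / (x * (x + c)) - c / (x + c) ^ 2) * (x * L x) ^ 2
          + 2 * (x * L x) * (N x) ^ 2 := by ring
    rw [key]
    exact add_nonneg h1 h2
  -- assemble
  have hint : interior (Set.Ioi (0:ℝ)) = Set.Ioi 0 := interior_Ioi
  apply convexOn_of_hasDerivWithinAt2_nonneg (convex_Ioi 0)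
    (f' := fun x => -(N x) / (x * L x) ^ 2) (f'' := E)
  · intro x hx
    exact ((hfd x hx).continuousAt).continuousWithinAt
  · intro x hx
    rw [hint] at hx ⊢
    exact ((hfd x hx).hasDerivWithinAt)
  · intro x hx
    rw [hint] at hx ⊢
    exact ((hF1d x hx).hasDerivWithinAt)
  · intro x hx
    rw [hint] at hx
    exact hEnn x hx
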